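/- Under the SISO discrete-time adaptive law setup, if moreover |k_p| · xᵀ Γ x < 2 xᵀ x for all nonzero x ∈ ℝ^N (i.e. Γ < (2/|k_p|) I), then for every t ∈ ℕ, V(t+1) − V(t) ≤ −(2 − max{|k_p| λ_max(Γ), γ}) · ε(t)²/m(t)² ≤ 0, where 2 − max{|k_p| λ_max(Γ), γ} > 0 and λ_max(Γ) denotes the largest eigenvalue of Γ. In particular V is nonincreasing. -/

import Mathlib

open Matrix BigOperators

section aux
variable {N : ℕ}

lemma symm_swap' {Γ : Matrix (Fin N) (Fin N) ℝ} (hsym : Γᵀ = Γ)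
    (a b : Fin N → ℝ) : (Γ *ᵥ a) ⬝ᵥ b = a ⬝ᵥ (Γ *ᵥ b) := by
  rw [← vecMul_transpose, hsym, ← dotProduct_mulVec]

lemma quad_sub' (Γ : Matrix (Fin N) (Fin N) ℝ) (hsym : Γᵀ = Γ) (hdet : IsUnit Γ)
    (φ z : Fin N → ℝ) (c : ℝ) :
    (φ - c • (Γ *ᵥ z)) ⬝ᵥ (Γ⁻¹ *ᵥ (φ - c • (Γ *ᵥ z))) =
      φ ⬝ᵥ (Γ⁻¹ *ᵥ φ) - 2 * c * (φ ⬝ᵥ z) + c ^ 2 * (z ⬝ᵥ (Γ *ᵥ z)) := by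
  have hinv : ∀ w, Γ⁻¹ *ᵥ (Γ *ᵥ w) = w := by
    intro w
    rw [mulVec_mulVec, Matrix.nonsing_inv_mul _ ((isUnit_iff_isUnit_det _).mp hdet), one_mulVec]
  have hinv2 : ∀ w, Γ *ᵥ (Γ⁻¹ *ᵥ w) = w := by
    intro w
    rw [mulVec_mulVec, Matrix.mul_nonsing_inv _ ((isUnit_iff_isUnit_det _).mp hdet), one_mulVec]
  have h3 : (Γ *ᵥ z) ⬝ᵥ (Γ⁻¹ *ᵥ φ) = z ⬝ᵥ φ := by
    rw [symm_swap' hsym, hinv2]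
  simp only [Matrix.mulVec_sub, Matrix.mulVec_smul, hinv, sub_dotProduct,
    dotProduct_sub, smul_dotProduct, dotProduct_smul, smul_eq_mul, h3,
    dotProduct_comm z φ, dotProduct_comm (Γ *ᵥ z) z]
  ring

lemma rayleigh_le' (hN : 0 < N) (Γ : Matrix (Fin N) (Fin N) ℝ) (hH : Γ.IsHermitian)
    (x : Fin N → ℝ) :
    x ⬝ᵥ (Γ *ᵥ x) ≤ (⨆ i, hH.eigenvalues i) * (x ⬝ᵥ x) := by
  have : Nonempty (Fin N) := ⟨⟨0, hN⟩⟩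
  set U : Matrix (Fin N) (Fin N) ℝ := (hH.eigenvectorUnitary : Matrix (Fin N) (Fin N) ℝ) with hU
  have hUU : U * star U = 1 := (Matrix.mem_unitaryGroup_iff).mp hH.eigenvectorUnitary.2
  have hstar : star U = Uᵀ := by
    show Uᴴ = Uᵀ
    exact Matrix.conjTranspose_eq_transpose_of_trivial U
  set y : Fin N → ℝ := Uᵀ *ᵥ x with hy
  have hdiag : RCLike.ofReal ∘ hH.eigenvalues = hH.eigenvalues := by
    funext i; simp
  have hdecomp : Γ = U * diagonal hH.eigenvalues * Uᵀ := by
    have := hH.spectral_theorem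
    rw [Unitary.conjStarAlgAut_apply, ← hU, hstar] at this
    exact this
  have key : x ⬝ᵥ (Γ *ᵥ x) = ∑ i, hH.eigenvalues i * (y i) ^ 2 := by
    conv_lhs => rw [hdecomp]
    rw [← mulVec_mulVec, ← mulVec_mulVec, dotProduct_mulVec (v := x), ← mulVec_transpose]
    simp only [← hy, dotProduct, mulVec_diagonal]
    apply Finset.sum_congr rfl
    intro i _; ring
  have key2 : x ⬝ᵥ x = ∑ i, (y i) ^ 2 := by
    have h1 : y ⬝ᵥ y = x ⬝ᵥ ((U * Uᵀ) *ᵥ x) := by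
      rw [hy, ← mulVec_mulVec, dotProduct_mulVec (v := x), ← mulVec_transpose]
    rw [hstar] at hUU
    rw [hUU, one_mulVec] at h1
    rw [← h1]
    simp only [dotProduct]
    apply Finset.sum_congr rfl
    intro i _; ring
  rw [key, key2, Finset.mul_sum]
  apply Finset.sum_le_sum
  intro i _
  have h1 : hH.eigenvalues i ≤ ⨆ j, hH.eigenvalues j :=
    le_ciSup (Set.Finite.bddAbove (Set.finite_range _)) i
  nlinarith [sq_nonneg (y i)]

end aux

/-- SISO discrete-time adaptive law: under `Γ < (2/|k_p|) I`, the Lyapunov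
decrement satisfies `V(t+1) − V(t) ≤ −(2 − max{|k_p| λ_max(Γ), γ}) ε²/m² ≤ 0`
with `2 − max{|k_p| λ_max(Γ), γ} > 0`; in particular `V` is nonincreasing. -/
theorem siso_discrete_lyapunov_decrement_bound
    (N : ℕ) (hN : 0 < N)
    (ζ : ℕ → Fin N → ℝ) (ξ : ℕ → ℝ)
    (kp : ℝ) (hkp : kp ≠ 0)
    (θs : Fin N → ℝ)
    (Γ : Matrix (Fin N) (Fin N) ℝ) (hΓ : Γ.PosDef)
    (hΓ2 : ∀ x : Fin N → ℝ, x ≠ 0 →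
      |kp| * (∑ i, x i * (Γ.mulVec x) i) < 2 * ∑ i, x i * x i)
    (γ : ℝ) (hγ1 : 0 < γ) (hγ2 : γ < 2)
    (θ : ℕ → Fin N → ℝ) (ρ : ℕ → ℝ)
    (m ε V : ℕ → ℝ)
    (hm : ∀ t, m t = Real.sqrt (1 + (∑ i, ζ t i * ζ t i) + ξ t ^ 2))
    (hε : ∀ t, ε t = kp * (∑ i, (θ t i - θs i) * ζ t i) + (ρ t - kp) * ξ t)
    (hθ : ∀ t, θ (t + 1) = θ t - (Real.sign kp * ε t / m t ^ 2) • Γ.mulVec (ζ t))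
    (hρ : ∀ t, ρ (t + 1) = ρ t - γ * ξ t * ε t / m t ^ 2)
    (hV : ∀ t, V t = |kp| * (∑ i, (θ t i - θs i) * (Γ⁻¹.mulVec (θ t - θs)) i)
        + γ⁻¹ * (ρ t - kp) ^ 2) :
    0 < 2 - max (|kp| * ⨆ i, hΓ.1.eigenvalues i) γ ∧
    (∀ t, V (t + 1) - V t ≤
        -(2 - max (|kp| * ⨆ i, hΓ.1.eigenvalues i) γ) * (ε t ^ 2 / m t ^ 2) ∧
      -(2 - max (|kp| * ⨆ i, hΓ.1.eigenvalues i) γ) * (ε t ^ 2 / m t ^ 2) ≤ 0) ∧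
    ∀ t, V (t + 1) ≤ V t := by
  have : Nonempty (Fin N) := ⟨⟨0, hN⟩⟩
  set lam : ℝ := ⨆ i, hΓ.1.eigenvalues i with hlam
  -- |kp| * lam < 2
  have hkl2 : |kp| * lam < 2 := by
    obtain ⟨i₀, hi₀⟩ := Finite.exists_max hΓ.1.eigenvalues
    have hsup : lam = hΓ.1.eigenvalues i₀ :=
      le_antisymm (ciSup_le hi₀) (le_ciSup (Set.Finite.bddAbove (Set.finite_range _)) i₀)
    set v : Fin N → ℝ := ⇑(hΓ.1.eigenvectorBasis i₀) with hv
    have hv0 : v ≠ 0 := by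
      intro h
      exact hΓ.1.eigenvectorBasis.orthonormal.ne_zero i₀ (by ext j; exact congrFun h j)
    obtain ⟨j, hj⟩ := Function.ne_iff.mp hv0
    have hS : 0 < ∑ i, v i * v i :=
      Finset.sum_pos' (fun i _ => mul_self_nonneg _)
        ⟨j, Finset.mem_univ j, mul_self_pos.mpr hj⟩
    have hev : Γ *ᵥ v = hΓ.1.eigenvalues i₀ • v := hΓ.1.mulVec_eigenvectorBasis i₀
    have h2 := hΓ2 v hv0
    have hsum : (∑ i, v i * (Γ.mulVec v) i) = hΓ.1.eigenvalues i₀ * ∑ i, v i * v i := by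
      rw [hev, Finset.mul_sum]
      apply Finset.sum_congr rfl
      intro i _
      simp [Pi.smul_apply, smul_eq_mul]; ring
    rw [hsum, ← mul_assoc] at h2
    rw [hsup]
    exact lt_of_mul_lt_mul_right h2 hS.le
  -- main body
  have hM2 : max (|kp| * lam) γ < 2 := max_lt hkl2 hγ2
  have hMpos : 0 < max (|kp| * lam) γ := lt_of_lt_of_le hγ1 (le_max_right _ _)
  set M : ℝ := max (|kp| * lam) γ with hMdef
  have hsym : Γᵀ = Γ := by
    have h := hΓ.1
    rwa [Matrix.IsHermitian, conjTranspose_eq_transpose_of_trivial] at h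
  have hunit : IsUnit Γ := hΓ.isUnit
  have hγ0 : γ ≠ 0 := hγ1.ne'
  have key : ∀ t, V (t + 1) - V t ≤ -(2 - M) * (ε t ^ 2 / m t ^ 2) := by
    intro t
    have hz : (0:ℝ) ≤ ∑ i, ζ t i * ζ t i := Finset.sum_nonneg fun i _ => mul_self_nonneg _
    have hm2 : m t ^ 2 = 1 + (∑ i, ζ t i * ζ t i) + ξ t ^ 2 := by
      rw [hm]
      exact Real.sq_sqrt (by nlinarith [sq_nonneg (ξ t)])
    have hu : 0 < m t ^ 2 := by rw [hm2]; nlinarith [sq_nonneg (ξ t)]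
    have hu0 : m t ^ 2 ≠ 0 := hu.ne'
    have hVt : ∀ s, V s = |kp| * ((θ s - θs) ⬝ᵥ (Γ⁻¹ *ᵥ (θ s - θs))) + γ⁻¹ * (ρ s - kp) ^ 2 :=
      fun s => hV s
    have hE : ε t = kp * ((θ t - θs) ⬝ᵥ ζ t) + (ρ t - kp) * ξ t := hε t
    have hθ' : θ (t + 1) - θs = (θ t - θs) - (Real.sign kp * ε t / m t ^ 2) • (Γ *ᵥ ζ t) := by
      rw [hθ t]; exact sub_right_comm _ _ _
    have hρ' : ρ (t + 1) - kp = (ρ t - kp) - γ * ξ t * ε t / m t ^ 2 := by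
      rw [hρ t]; ring
    have quad := quad_sub' Γ hsym hunit (θ t - θs) (ζ t) (Real.sign kp * ε t / m t ^ 2)
    have hΔ : V (t + 1) - V t =
        -2 * (ε t ^ 2 / m t ^ 2)
          + (|kp| * (ζ t ⬝ᵥ (Γ *ᵥ ζ t)) + γ * ξ t ^ 2) * (ε t ^ 2 / (m t ^ 2) ^ 2) := by
      rw [hVt (t + 1), hVt t, hθ', hρ', quad, hE]
      rcases hkp.lt_or_gt with hneg | hpos
      · rw [Real.sign_of_neg hneg, abs_of_neg hneg]
        have hmt0 : m t ≠ 0 := by rintro h; simp [h] at hu0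
        field_simp
        ring
      · rw [Real.sign_of_pos hpos, abs_of_pos hpos]
        have hmt0 : m t ≠ 0 := by rintro h; simp [h] at hu0
        field_simp
        ring
    have hzz : (0:ℝ) ≤ ζ t ⬝ᵥ ζ t := Finset.sum_nonneg fun i _ => mul_self_nonneg _
    have hray := rayleigh_le' hN Γ hΓ.1 (ζ t)
    have hQ : |kp| * (ζ t ⬝ᵥ (Γ *ᵥ ζ t)) + γ * ξ t ^ 2 ≤ M * m t ^ 2 := by
      have h1 : |kp| * (ζ t ⬝ᵥ (Γ *ᵥ ζ t)) ≤ (|kp| * lam) * (ζ t ⬝ᵥ ζ t) := by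
        calc |kp| * (ζ t ⬝ᵥ (Γ *ᵥ ζ t)) ≤ |kp| * (lam * (ζ t ⬝ᵥ ζ t)) :=
              mul_le_mul_of_nonneg_left hray (abs_nonneg kp)
          _ = (|kp| * lam) * (ζ t ⬝ᵥ ζ t) := by ring
      have h2 : |kp| * lam ≤ M := le_max_left _ _
      have h3 : γ ≤ M := le_max_right _ _
      have hm2' : m t ^ 2 = 1 + (ζ t ⬝ᵥ ζ t) + ξ t ^ 2 := hm2
      nlinarith [sq_nonneg (ξ t)]
    have hEu : (0:ℝ) ≤ ε t ^ 2 / (m t ^ 2) ^ 2 := by positivity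
    have hb : (|kp| * (ζ t ⬝ᵥ (Γ *ᵥ ζ t)) + γ * ξ t ^ 2) * (ε t ^ 2 / (m t ^ 2) ^ 2)
        ≤ M * m t ^ 2 * (ε t ^ 2 / (m t ^ 2) ^ 2) := mul_le_mul_of_nonneg_right hQ hEu
    have heq : M * m t ^ 2 * (ε t ^ 2 / (m t ^ 2) ^ 2) = M * (ε t ^ 2 / m t ^ 2) := by
      field_simp
    rw [hΔ]
    rw [heq] at hb
    have : -(2 - M) * (ε t ^ 2 / m t ^ 2)
        = -2 * (ε t ^ 2 / m t ^ 2) + M * (ε t ^ 2 / m t ^ 2) := by ring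
    rw [this]
    linarith
  have hnp : ∀ t, -(2 - M) * (ε t ^ 2 / m t ^ 2) ≤ 0 := by
    intro t
    have h := div_nonneg (sq_nonneg (ε t)) (sq_nonneg (m t))
    nlinarith
  exact ⟨by linarith, fun t => ⟨key t, hnp t⟩, fun t => by linarith [key t, hnp t]⟩
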